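/- Let w be a prefix normal word containing at least one occurrence of a. Then the word w b^{|w|} is a Lyndon word (with respect to the order a < b). -/

import Mathlib

/- Binary words are `List Bool`, with letter `a = false` and `b = true`
   (so that `a < b` in the `Bool` order). -/

/-- number of `a`'s in the prefix of length `k` -/
def Pa (w : List Bool) (k : ℕ) : ℕ := (w.take k).count false

/-- number of `b`'s in the prefix of length `k` -/
def Pb (w : List Bool) (k : ℕ) : ℕ := (w.take k).count true

/-- maximum number of `a`'s in a factor of `w` of length `k` -/
noncomputable def Fa (w : List Bool) (k : ℕ) : ℕ :=
  sSup {n | ∃ v : List Bool, v <:+: w ∧ v.length = k ∧ v.count false = n}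

/-- maximum number of `b`'s in a factor of `w` of length `k` -/
noncomputable def Fb (w : List Bool) (k : ℕ) : ℕ :=
  sSup {n | ∃ v : List Bool, v <:+: w ∧ v.length = k ∧ v.count true = n}

/-- minimum number of `a`'s in a factor of `w` of length `k` -/
noncomputable def fa (w : List Bool) (k : ℕ) : ℕ :=
  sInf {n | ∃ v : List Bool, v <:+: w ∧ v.length = k ∧ v.count false = n}

/-- `w` is prefix normal w.r.t. `a`: no factor has more `a`'s than the prefix
    of the same length -/
def PrefixNormal (w : List Bool) : Prop :=
  ∀ v : List Bool, v <:+: w → v.count false ≤ Pa w v.length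

/-- position of the `i`-th `a` in `w` -/
noncomputable def posA (w : List Bool) (i : ℕ) : ℕ := sInf {k | Pa w k = i}

/-- `u` is the prefix normal form of `w` w.r.t. `a` -/
def IsPNFa (w u : List Bool) : Prop :=
  u.length = w.length ∧ ∀ k ≤ w.length, Pa u k = Fa w k ∧ Fa u k = Fa w k

/-- `u` is the prefix normal form of `w` w.r.t. `b` -/
def IsPNFb (w u : List Bool) : Prop :=
  u.length = w.length ∧ ∀ k ≤ w.length, Pb u k = Fb w k ∧ Fb u k = Fb w k

/-- the Parikh set of `w`: Parikh vectors `(|v|_a, |v|_b)` of factors of `w` -/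
def ParikhSet (w : List Bool) : Set (ℕ × ℕ) :=
  {p | ∃ v : List Bool, v <:+: w ∧ p = (v.count false, v.count true)}

/-- Lyndon word: strictly lexicographically smaller than each proper nonempty suffix -/
def IsLyndon (w : List Bool) : Prop :=
  w ≠ [] ∧ ∀ v : List Bool, v <:+ w → v ≠ [] → v ≠ w → List.Lex (· < ·) w v

/-- pre-necklace: a power of the letter `b`, or a prefix of a Lyndon word -/
def PreNecklace (w : List Bool) : Prop :=
  (∃ n, w = List.replicate n true) ∨ ∃ v, IsLyndon v ∧ w <+: v

private lemma lex_help (p t₁ t₂ : List Bool) :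
    List.Lex (· < ·) (p ++ false :: t₁) (p ++ true :: t₂) := by
  induction p with
  | nil => exact List.Lex.rel (by decide)
  | cons a p ih => exact List.Lex.cons ih

private lemma mismatch : ∀ (w s : List Bool), ¬ s <+: w → s.length ≤ w.length →
    ∃ p x t₁ y t₂, x ≠ y ∧ w = p ++ x :: t₁ ∧ s = p ++ y :: t₂ := by
  intro w
  induction w with
  | nil =>
    intro s hp hl
    have : s = [] := List.eq_nil_of_length_eq_zero (by simpa using hl)
    subst this
    exact absurd List.nil_prefix hp
  | cons a w ih =>
    intro s hp hl
    match s with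
    | [] => exact absurd List.nil_prefix hp
    | b :: s =>
      by_cases hab : b = a
      · subst hab
        have : ¬ s <+: w := fun hc => hp (List.cons_prefix_cons.mpr ⟨rfl, hc⟩)
        obtain ⟨p, x, t₁, y, t₂, hxy, h1, h2⟩ := ih s this (by simpa using hl)
        exact ⟨b :: p, x, t₁, y, t₂, hxy, by simp [h1], by simp [h2]⟩
      · exact ⟨[], a, w, b, s, fun hc => hab hc.symm, rfl, rfl⟩

private lemma exists_split (l : List Bool) (hl : false ∈ l) :
    ∃ t rest, l = List.replicate t true ++ false :: rest := by
  induction l with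
  | nil => simp at hl
  | cons a l ih =>
    cases a with
    | false => exact ⟨0, l, rfl⟩
    | true =>
      simp at hl
      obtain ⟨t, rest, h⟩ := ih hl
      exact ⟨t + 1, rest, by simp [List.replicate_succ, h]⟩

theorem stmt18 (w : List Bool) (h : PrefixNormal w) (ha : 0 < w.count false) :
    IsLyndon (w ++ List.replicate w.length true) := by
  set n := w.length with hn
  set r := List.replicate n true with hr
  have hmem : false ∈ w := List.count_pos_iff.mp ha
  -- w starts with false
  obtain ⟨w', hw'⟩ : ∃ w', w = false :: w' := by
    obtain ⟨s, t, hst⟩ := List.append_of_mem hmem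
    have hinf : [false] <:+: w := ⟨s, t, by simpa using hst.symm⟩
    have h1 := h [false] hinf
    match w, hmem with
    | false :: w', _ => exact ⟨w', rfl⟩
    | true :: w', _ => simp [Pa] at h1
  have hwne : w ≠ [] := by simp [hw']
  -- suffixes of r are easy
  have htrue : ∀ v : List Bool, v <:+ r → v ≠ [] →
      List.Lex (· < ·) (w ++ r) v := by
    intro v hv hvne
    match v with
    | b :: v' =>
      have hb : b = true := by
        have := hv.subset List.mem_cons_self
        rw [hr] at this
        exact List.eq_of_mem_replicate this
      subst hb
      rw [hw']
      exact List.Lex.rel (by decide)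
  constructor
  · simp [hwne]
  intro v hsuf hvne hne
  obtain ⟨u, hu⟩ := hsuf
  rcases List.append_eq_append_iff.mp hu with ⟨s, hws, hvs⟩ | ⟨c, _, hrc⟩
  · -- v = s ++ r, w = u ++ s
    subst hvs
    by_cases hsne : s = []
    · subst hsne; exact htrue _ (by simp) hvne
    have hune : u ≠ [] := by
      rintro rfl
      simp at hws
      exact hne (by rw [hws])
    have hssuf : s <:+ w := ⟨u, hws.symm⟩
    have hslen : s.length < n := by
      rw [hn, hws, List.length_append]
      have := List.length_pos_iff.mpr hune
      omega
    by_cases hpre : s <+: w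
    · -- border case: s = w.take m
      have htake : w.take s.length = s := (List.prefix_iff_eq_take.mp hpre).symm
      set m := s.length with hm
      have hfm : false ∈ w.drop m := by
        by_contra hc
        have h0 : (w.drop m).count false = 0 := List.count_eq_zero.mpr hc
        have h1 : w.count false = s.count false := by
          conv_lhs => rw [← List.take_append_drop m w]
          rw [List.count_append, h0, htake, Nat.add_zero]
        have h2 : w.count false = u.count false + s.count false := by
          rw [hws, List.count_append]
        have hu0 : 0 < u.count false := by
          rw [hw'] at hws
          match u, hune, hws with
          | b :: u', _, hws =>
            have hb : b = false := (List.cons.injEq _ _ _ _ ▸ hws).1.symm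
            rw [hb]; simp
        omega
      obtain ⟨t, rest, hdrop⟩ := exists_split _ hfm
      have hw2 : w = s ++ (List.replicate t true ++ false :: rest) := by
        conv_lhs => rw [← List.take_append_drop m w, htake, hdrop]
      have ht : t + 1 ≤ n := by
        have := congrArg List.length hw2
        simp [hn] at this ⊢
        omega
      have hrep : r = List.replicate t true ++ true :: List.replicate (n - t - 1) true := by
        have hne : n = t + (1 + (n - t - 1)) := by omega
        calc r = List.replicate (t + (1 + (n - t - 1))) true := by rw [hr, ← hne]
        _ = _ := by rw [List.replicate_add, List.replicate_add]; simp [List.replicate_succ]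
      rw [hrep, hw2]
      have goal := lex_help (s ++ List.replicate t true)
        (rest ++ (List.replicate t true ++ true :: List.replicate (n - t - 1) true))
        (List.replicate (n - t - 1) true)
      simpa using goal
    · -- mismatch case
      obtain ⟨p, x, t₁, y, t₂, hxy, hw2, hs2⟩ := mismatch w s hpre (le_of_lt hslen)
      match x, y, hxy with
      | false, true, _ =>
        rw [hw2, hs2]
        have goal := lex_help p (t₁ ++ r) (t₂ ++ r)
        simpa using goal
      | true, false, _ =>
        exfalso
        have hinf : p ++ [false] <:+: w := by
          have h1 : p ++ [false] <+: s := ⟨t₂, by simp [hs2]⟩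
          exact h1.isInfix.trans hssuf.isInfix
        have h2 := h (p ++ [false]) hinf
        have h3 : w.take (p.length + 1) = p ++ [true] := by
          rw [hw2]
          simp [List.take_append]
        simp [Pa, h3, List.count_append] at h2
  · -- v <:+ r
    exact htrue v ⟨c, hrc.symm⟩ hvne
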